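/- arXiv:1112.5640 — 2 statements merged into one kernel-verified Lean document; each statement's English description precedes it below -/
import Mathlib

section
/- Let f₁ = g₁ - h₁ and f₂ = g₂ - h₂ be DC functions on a convex set C ⊆ ℝˢ such that g₁, h₁, g₂, h₂ are nonnegative convex functions on C. Then the product f₁·f₂ is DC on C with decomposition f₁ f₂ = ½((g₁+g₂)² + (h₁+h₂)²) - ½((g₁+h₂)² + (g₂+h₁)²), and moreover all four squared-sum terms in this decomposition are nonnegative convex functions on C. -/
theorem dc_product
    {s : ℕ} {C : Set (Fin s → ℝ)} (hC : Convex ℝ C)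
    (f₁ f₂ g₁ h₁ g₂ h₂ : (Fin s → ℝ) → ℝ)
    (hg₁ : ConvexOn ℝ C g₁) (hh₁ : ConvexOn ℝ C h₁)
    (hg₂ : ConvexOn ℝ C g₂) (hh₂ : ConvexOn ℝ C h₂)
    (hg₁0 : ∀ x ∈ C, 0 ≤ g₁ x) (hh₁0 : ∀ x ∈ C, 0 ≤ h₁ x)
    (hg₂0 : ∀ x ∈ C, 0 ≤ g₂ x) (hh₂0 : ∀ x ∈ C, 0 ≤ h₂ x)
    (hf₁ : ∀ x ∈ C, f₁ x = g₁ x - h₁ x) (hf₂ : ∀ x ∈ C, f₂ x = g₂ x - h₂ x) :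
    (∀ x ∈ C, f₁ x * f₂ x =
        (1/2) * ((g₁ x + g₂ x)^2 + (h₁ x + h₂ x)^2)
        - (1/2) * ((g₁ x + h₂ x)^2 + (g₂ x + h₁ x)^2)) ∧
    ConvexOn ℝ C (fun x => (1/2) * ((g₁ x + g₂ x)^2 + (h₁ x + h₂ x)^2)) ∧
    ConvexOn ℝ C (fun x => (1/2) * ((g₁ x + h₂ x)^2 + (g₂ x + h₁ x)^2)) ∧
    (∀ x ∈ C, 0 ≤ (g₁ x + g₂ x)^2) ∧ (∀ x ∈ C, 0 ≤ (h₁ x + h₂ x)^2) ∧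
    (∀ x ∈ C, 0 ≤ (g₁ x + h₂ x)^2) ∧ (∀ x ∈ C, 0 ≤ (g₂ x + h₁ x)^2) ∧
    ConvexOn ℝ C (fun x => (g₁ x + g₂ x)^2) ∧
    ConvexOn ℝ C (fun x => (h₁ x + h₂ x)^2) ∧
    ConvexOn ℝ C (fun x => (g₁ x + h₂ x)^2) ∧
    ConvexOn ℝ C (fun x => (g₂ x + h₁ x)^2) := by
  have sq_cvx : ∀ (a b : (Fin s → ℝ) → ℝ), ConvexOn ℝ C a → ConvexOn ℝ C b →
      (∀ x ∈ C, 0 ≤ a x) → (∀ x ∈ C, 0 ≤ b x) →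
      ConvexOn ℝ C (fun x => (a x + b x)^2) := by
    intro a b ha hb ha0 hb0
    refine ⟨hC, fun x hx y hy p q hp hq hpq => ?_⟩
    have hz : p • x + q • y ∈ C := hC hx hy hp hq hpq
    have h1 := ha.2 hx hy hp hq hpq
    have h2 := hb.2 hx hy hp hq hpq
    simp only [smul_eq_mul] at *
    have hzn : 0 ≤ a (p • x + q • y) + b (p • x + q • y) :=
      add_nonneg (ha0 _ hz) (hb0 _ hz)
    have hxn : 0 ≤ a x + b x := add_nonneg (ha0 _ hx) (hb0 _ hx)
    have hyn : 0 ≤ a y + b y := add_nonneg (ha0 _ hy) (hb0 _ hy)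
    nlinarith [sq_nonneg (a x + b x - (a y + b y)), mul_nonneg hp hq,
      sq_nonneg (a (p • x + q • y) + b (p • x + q • y)),
      mul_nonneg (mul_nonneg hp hq) (sq_nonneg (a x + b x - (a y + b y)))]
  have c1 := sq_cvx g₁ g₂ hg₁ hg₂ hg₁0 hg₂0
  have c2 := sq_cvx h₁ h₂ hh₁ hh₂ hh₁0 hh₂0
  have c3 := sq_cvx g₁ h₂ hg₁ hh₂ hg₁0 hh₂0
  have c4 := sq_cvx g₂ h₁ hg₂ hh₁ hg₂0 hh₁0
  refine ⟨?_, ?_, ?_, fun x _ => sq_nonneg _, fun x _ => sq_nonneg _,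
    fun x _ => sq_nonneg _, fun x _ => sq_nonneg _, c1, c2, c3, c4⟩
  · intro x hx
    rw [hf₁ x hx, hf₂ x hx]; ring
  · have := ((c1.add c2).smul (c := (1:ℝ)/2) (by norm_num))
    simpa [smul_eq_mul] using this
  · have := ((c3.add c4).smul (c := (1:ℝ)/2) (by norm_num))
    simpa [smul_eq_mul] using this
end

section
/- Let f : ℝˢ → ℝ be DC with decomposition f = g - h where g, h are convex, and let q : ℝ → ℝ be convex and differentiable. Suppose K is a constant with K > |q'(f(x))| for all x. Then q ∘ f is DC with decomposition q(f(x)) = p(x) - K(g(x) + h(x)), where p(x) := q(f(x)) + K(g(x) + h(x)) is convex. -/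
lemma tangent_le {q : ℝ → ℝ} (hq : ConvexOn ℝ Set.univ q)
    (hq' : Differentiable ℝ q) (a t : ℝ) :
    q a + deriv q a * (t - a) ≤ q t := by
  rcases lt_trichotomy a t with hlt | heq | hgt
  · have := hq.deriv_le_slope (Set.mem_univ a) (Set.mem_univ t) hlt (hq' a)
    rw [slope_def_field] at this
    have := (le_div_iff₀ (by linarith : (0:ℝ) < t - a)).mp this
    linarith
  · simp [heq]
  · have := hq.slope_le_deriv (Set.mem_univ t) (Set.mem_univ a) hgt (hq' a)
    rw [slope_comm, slope_def_field] at this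
    have := (div_le_iff_of_neg (by linarith : t - a < (0:ℝ))).mp this
    linarith

theorem dc_convex_composition {s : ℕ}
    (f g h : (Fin s → ℝ) → ℝ) (q : ℝ → ℝ) (K : ℝ)
    (hg : ConvexOn ℝ Set.univ g) (hh : ConvexOn ℝ Set.univ h)
    (hf : f = g - h)
    (hq : ConvexOn ℝ Set.univ q) (hq' : Differentiable ℝ q)
    (hK : ∀ x, |deriv q (f x)| < K) :
    ConvexOn ℝ Set.univ (fun x => q (f x) + K * (g x + h x)) ∧
    (∀ x, q (f x) =
      (q (f x) + K * (g x + h x)) - K * (g x + h x)) := by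
  constructor
  · refine ⟨convex_univ, fun x _ y _ a b ha hb hab => ?_⟩
    set z := a • x + b • y with hz
    have hA : g z ≤ a * g x + b * g y := by
      simpa [smul_eq_mul] using hg.2 (Set.mem_univ x) (Set.mem_univ y) ha hb hab
    have hB : h z ≤ a * h x + b * h y := by
      simpa [smul_eq_mul] using hh.2 (Set.mem_univ x) (Set.mem_univ y) ha hb hab
    have hfz : f z = g z - h z := by rw [hf]; rfl
    have hfx : f x = g x - h x := by rw [hf]; rfl
    have hfy : f y = g y - h y := by rw [hf]; rfl
    set d := deriv q (f z) with hd
    have h1 : q (f z) + d * (f x - f z) ≤ q (f x) := tangent_le hq hq' (f z) (f x)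
    have h2 : q (f z) + d * (f y - f z) ≤ q (f y) := tangent_le hq hq' (f z) (f y)
    have hKz := hK z
    have hd1 : -K < d := (abs_lt.mp hKz).1
    have hd2 : d < K := (abs_lt.mp hKz).2
    -- combine: a*h1 + b*h2
    have h3 : q (f z) + d * (a * f x + b * f y - f z) ≤ a * q (f x) + b * q (f y) := by
      have e1 := mul_le_mul_of_nonneg_left h1 ha
      have e2 := mul_le_mul_of_nonneg_left h2 hb
      have e3 : q (f z) + d * (a * f x + b * f y - f z)
          = a * (q (f z) + d * (f x - f z)) + b * (q (f z) + d * (f y - f z)) := by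
        have hb' : b = 1 - a := by linarith
        rw [hb']; ring
      linarith [e1, e2]
    have key : a * f x + b * f y - f z = (a * g x + b * g y - g z) - (a * h x + b * h y - h z) := by
      rw [hfz, hfx, hfy]; ring
    have hAn : 0 ≤ a * g x + b * g y - g z := by linarith
    have hBn : 0 ≤ a * h x + b * h y - h z := by linarith
    have habs : |d| ≤ K := le_of_lt hKz
    have h4 : -(d * (a * f x + b * f y - f z)) ≤ K * (a * g x + b * g y - g z) + K * (a * h x + b * h y - h z) := by
      rw [key]
      nlinarith [hd1, hd2, hAn, hBn]
    simp only [smul_eq_mul]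
    nlinarith [h3, h4]
  · intro x; ring
end
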